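/- For every d ∈ (0,1), the WENO-PPM5 mapping function is monotonically non-decreasing on [0,1]: for all 0 ≤ ω₁ ≤ ω₂ ≤ 1, g(ω₁) ≤ g(ω₂). -/

import Mathlib

/-- The left branch (ω ≤ d) of the WENO-PPM5 mapping function. -/
noncomputable def gPPM5L (d ω : ℝ) : ℝ := d * (1 + (ω / d - 1) ^ 5)

/-- The right branch (ω > d) of the WENO-PPM5 mapping function. -/
noncomputable def gPPM5R (d ω : ℝ) : ℝ := d + (ω - d) ^ 5 / (d - 1) ^ 4

/-- The WENO-PPM5 mapping function. -/
noncomputable def gPPM5 (d ω : ℝ) : ℝ := if ω ≤ d then gPPM5L d ω else gPPM5R d ω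

lemma pow5_mono {x y : ℝ} (h : x ≤ y) : x ^ 5 ≤ y ^ 5 :=
  (Odd.strictMono_pow (by decide : Odd 5)).monotone h

lemma gPPM5L_mono {d : ℝ} (hd : 0 < d) {x y : ℝ} (h : x ≤ y) :
    gPPM5L d x ≤ gPPM5L d y := by
  unfold gPPM5L
  have : x / d ≤ y / d := by gcongr
  have := pow5_mono (sub_le_sub_right this 1)
  nlinarith

lemma gPPM5R_mono {d : ℝ} (hd : d ≠ 1) {x y : ℝ} (h : x ≤ y) :
    gPPM5R d x ≤ gPPM5R d y := by
  unfold gPPM5R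
  have hpos : (0:ℝ) < (d - 1) ^ 4 := by
    have : d - 1 ≠ 0 := sub_ne_zero.mpr hd
    positivity
  have h5 := pow5_mono (sub_le_sub_right h d)
  gcongr

theorem wenoPPM5_monotone (d : ℝ) (hd : d ∈ Set.Ioo (0 : ℝ) 1) :
    MonotoneOn (gPPM5 d) (Set.Icc (0 : ℝ) 1) := by
  obtain ⟨hd0, hd1⟩ := hd
  intro x hx y hy hxy
  unfold gPPM5
  have hLd : gPPM5L d d = d := by unfold gPPM5L; field_simp; norm_num
  have hRd : gPPM5R d d = d := by unfold gPPM5R; simp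
  split_ifs with h1 h2 h2
  · exact gPPM5L_mono hd0 hxy
  · calc gPPM5L d x ≤ gPPM5L d d := gPPM5L_mono hd0 h1
      _ = gPPM5R d d := by rw [hLd, hRd]
      _ ≤ gPPM5R d y := gPPM5R_mono hd1.ne (le_of_not_ge h2)
  · linarith
  · exact gPPM5R_mono hd1.ne hxy
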